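/- Let M : ℝ → ℝ be measurable, nonnegative, supported on [E₀,∞), of polynomial growth, and not a.e. zero, and fix μ ∈ ℝ. Then Y(β) = ∫ f(E,β,μ)(E−μ) M(E) dE defines a continuous function of β on (0,∞) which is monotone (strictly decreasing if M is positive on a set of positive measure where E ≠ μ); hence Y is injective on (0,∞). -/

import Mathlib

open MeasureTheory Set

/-- The Fermi–Dirac distribution `f(E,β,μ) = (1 + exp(β(E-μ)))⁻¹`. -/
noncomputable def fermi (β μ E : ℝ) : ℝ := (1 + Real.exp (β * (E - μ)))⁻¹

lemma fermi_pos (β μ E : ℝ) : 0 < fermi β μ E := by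
  unfold fermi
  have := Real.exp_pos (β * (E - μ))
  positivity

lemma fermi_le_one (β μ E : ℝ) : fermi β μ E ≤ 1 := by
  unfold fermi
  rw [inv_le_one_iff₀]
  right
  linarith [Real.exp_pos (β * (E - μ))]

lemma fermi_le_exp (β μ E : ℝ) : fermi β μ E ≤ Real.exp (-(β * (E - μ))) := by
  rw [Real.exp_neg]
  unfold fermi
  apply inv_anti₀ (Real.exp_pos _)
  linarith

/-- Antitonicity of `fermi · μ E * (E - μ)` in `β`. -/
lemma fermi_mul_anti {β₁ β₂ : ℝ} (μ E : ℝ) (h12 : β₁ ≤ β₂) :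
    fermi β₂ μ E * (E - μ) ≤ fermi β₁ μ E * (E - μ) := by
  rcases lt_trichotomy E μ with h | h | h
  · have hneg : E - μ < 0 := by linarith
    have hexp : Real.exp (β₂ * (E - μ)) ≤ Real.exp (β₁ * (E - μ)) := by
      apply Real.exp_le_exp.2
      exact mul_le_mul_of_nonpos_right h12 hneg.le
    have hf : fermi β₁ μ E ≤ fermi β₂ μ E := by
      unfold fermi
      apply inv_anti₀ (by positivity)
      linarith
    exact mul_le_mul_of_nonpos_right hf hneg.le
  · simp [h]
  · have hpos : 0 < E - μ := by linarith
    have hexp : Real.exp (β₁ * (E - μ)) ≤ Real.exp (β₂ * (E - μ)) := by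
      apply Real.exp_le_exp.2
      exact mul_le_mul_of_nonneg_right h12 hpos.le
    have hf : fermi β₂ μ E ≤ fermi β₁ μ E := by
      unfold fermi
      apply inv_anti₀ (by positivity)
      linarith
    exact mul_le_mul_of_nonneg_right hf hpos.le

/-- Strict antitonicity of `fermi · μ E * (E - μ)` in `β` when `E ≠ μ`. -/
lemma fermi_mul_strict_anti {β₁ β₂ : ℝ} (μ E : ℝ) (h12 : β₁ < β₂) (hE : E ≠ μ) :
    fermi β₂ μ E * (E - μ) < fermi β₁ μ E * (E - μ) := by
  rcases lt_or_gt_of_ne hE with h | h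
  · have hneg : E - μ < 0 := by linarith
    have hexp : Real.exp (β₂ * (E - μ)) < Real.exp (β₁ * (E - μ)) := by
      apply Real.exp_lt_exp.2
      exact mul_lt_mul_of_neg_right h12 hneg
    have hf : fermi β₁ μ E < fermi β₂ μ E := by
      unfold fermi
      apply inv_strictAnti₀ (by positivity)
      linarith
    exact mul_lt_mul_of_neg_right hf hneg
  · have hpos : 0 < E - μ := by linarith
    have hexp : Real.exp (β₁ * (E - μ)) < Real.exp (β₂ * (E - μ)) := by
      apply Real.exp_lt_exp.2
      exact mul_lt_mul_of_pos_right h12 hpos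
    have hf : fermi β₂ μ E < fermi β₁ μ E := by
      unfold fermi
      apply inv_strictAnti₀ (by positivity)
      linarith
    exact mul_lt_mul_of_pos_right hf hpos

/-- Dominating function for the integrand. -/
noncomputable def Ybound (μ C η b E : ℝ) : ℝ :=
  C * (1 + |E|) ^ η * |E - μ| * Real.exp (-b * max (E - μ) 0)

lemma Ybound_nonneg {μ C η b : ℝ} (hC : 0 ≤ C) (E : ℝ) : 0 ≤ Ybound μ C η b E := by
  unfold Ybound
  have h1 : (0:ℝ) < 1 + |E| := by positivity
  positivity

lemma Ybound_continuous (μ C η b : ℝ) : Continuous (Ybound μ C η b) := by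
  unfold Ybound
  have h1 : Continuous fun E : ℝ => (1 + |E|) ^ η := by
    apply Continuous.rpow_const (continuous_const.add continuous_abs)
    intro x
    left
    show (1:ℝ) + |x| ≠ 0
    positivity
  have h2 : Continuous fun E : ℝ => |E - μ| := (continuous_id.sub continuous_const).abs
  have h3 : Continuous fun E : ℝ => Real.exp (-b * max (E - μ) 0) :=
    (continuous_const.mul ((continuous_id.sub continuous_const).max continuous_const)).rexp
  exact ((continuous_const.mul h1).mul h2).mul h3

lemma fermi_le_exp_max {β b μ E : ℝ} (hb : 0 < b) (hbβ : b ≤ β) :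
    fermi β μ E ≤ Real.exp (-b * max (E - μ) 0) := by
  rcases le_or_gt E μ with h | h
  · rw [max_eq_right (by linarith : E - μ ≤ 0)]
    simpa using fermi_le_one β μ E
  · rw [max_eq_left (by linarith : (0:ℝ) ≤ E - μ)]
    refine (fermi_le_exp β μ E).trans (Real.exp_le_exp.2 ?_)
    have : b * (E - μ) ≤ β * (E - μ) := mul_le_mul_of_nonneg_right hbβ (by linarith)
    linarith

/-- The pointwise bound on the integrand. -/
lemma integrand_le_bound {μ E₀ C η b β : ℝ} {M : ℝ → ℝ}
    (hMnn : ∀ E, 0 ≤ M E) (hA : ∀ E ≤ E₀, M E = 0)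
    (hB : ∀ E, M E ≤ C * (1 + |E|) ^ η)
    (hb : 0 < b) (hbβ : b ≤ β) (E : ℝ) :
    ‖fermi β μ E * (E - μ) * M E‖ ≤ indicator (Ici E₀) (Ybound μ C η b) E := by
  have hC : 0 ≤ C := by
    have := (hMnn 0).trans (hB 0)
    simpa using this
  rcases le_or_gt E E₀ with hE | hE
  · rcases eq_or_lt_of_le hE with rfl | hE'
    · rw [indicator_of_mem (by exact self_mem_Ici)]
      rw [hA E le_rfl]
      simpa using Ybound_nonneg hC E
    · rw [indicator_of_notMem (by simpa using hE')]
      rw [hA E hE]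
      simp
  · rw [indicator_of_mem (by exact le_of_lt hE : E ∈ Ici E₀)]
    rw [norm_mul, norm_mul]
    have h1 : ‖fermi β μ E‖ = fermi β μ E := abs_of_pos (fermi_pos β μ E)
    have h2 : ‖M E‖ = M E := abs_of_nonneg (hMnn E)
    rw [h1, h2]
    unfold Ybound
    have key : fermi β μ E * ‖E - μ‖ * M E ≤
        Real.exp (-b * max (E - μ) 0) * |E - μ| * (C * (1 + |E|) ^ η) := by
      apply mul_le_mul
      · exact mul_le_mul_of_nonneg_right (fermi_le_exp_max hb hbβ) (norm_nonneg _)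
      · exact hB E
      · exact hMnn E
      · positivity
    calc fermi β μ E * ‖E - μ‖ * M E
        ≤ Real.exp (-b * max (E - μ) 0) * |E - μ| * (C * (1 + |E|) ^ η) := key
      _ = C * (1 + |E|) ^ η * |E - μ| * Real.exp (-b * max (E - μ) 0) := by ring

/-- Integrability of the dominating function. -/
lemma Ybound_indicator_integrable {μ E₀ C η b : ℝ} (hC : 0 ≤ C) (hb : 0 < b) :
    Integrable (indicator (Ici E₀) (Ybound μ C η b)) := by
  rw [integrable_indicator_iff measurableSet_Ici]
  rw [integrableOn_Ici_iff_integrableOn_Ioi]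
  apply integrable_of_isBigO_exp_neg (half_pos hb)
    ((Ybound_continuous μ C η b).continuousOn)
  rw [Asymptotics.isBigO_iff]
  set s : ℝ := |η| + 1 with hs
  set K : ℝ := C * 2 ^ |η| * (1 + |μ|) * Real.exp (b * |μ|) with hK
  refine ⟨K, ?_⟩
  have hev : ∀ᶠ x : ℝ in Filter.atTop, x ^ s * Real.exp (-(b/2) * x) ≤ 1 := by
    have := tendsto_rpow_mul_exp_neg_mul_atTop_nhds_zero s (b/2) (half_pos hb)
    exact this.eventually (eventually_le_nhds (by norm_num))
  filter_upwards [hev, Filter.eventually_ge_atTop (max 1 (|μ| + 1))] with x hx1 hx2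
  have hx1' : (1:ℝ) ≤ x := le_trans (le_max_left _ _) hx2
  have hxμ : |μ| + 1 ≤ x := le_trans (le_max_right _ _) hx2
  have hx0 : 0 < x := by linarith
  have hxmu : μ < x := by
    have := le_abs_self μ
    linarith
  -- bound each factor
  have f1 : (1 + |x|) ^ η ≤ 2 ^ |η| * x ^ |η| := by
    rw [abs_of_pos hx0]
    calc (1 + x) ^ η ≤ (1 + x) ^ |η| :=
          Real.rpow_le_rpow_of_exponent_le (by linarith) (le_abs_self η)
      _ ≤ (2 * x) ^ |η| := by
          apply Real.rpow_le_rpow (by linarith) (by linarith) (abs_nonneg η)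
      _ = 2 ^ |η| * x ^ |η| := Real.mul_rpow (by norm_num) hx0.le
  have f2 : |x - μ| ≤ (1 + |μ|) * x := by
    rw [abs_of_pos (by linarith : 0 < x - μ)]
    have : |μ| * 1 ≤ |μ| * x := mul_le_mul_of_nonneg_left hx1' (abs_nonneg μ)
    have hμ : -μ ≤ |μ| := neg_le_abs μ
    nlinarith [abs_nonneg μ]
  have f3 : Real.exp (-b * max (x - μ) 0) ≤ Real.exp (b * |μ|) * Real.exp (-b * x) := by
    rw [max_eq_left (by linarith : (0:ℝ) ≤ x - μ), ← Real.exp_add]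
    apply Real.exp_le_exp.2
    have : b * μ ≤ b * |μ| := mul_le_mul_of_nonneg_left (le_abs_self μ) hb.le
    nlinarith
  have hYb : Ybound μ C η b x ≤ K * (x ^ s * Real.exp (-b * x)) := by
    unfold Ybound
    have hx_eta : (0:ℝ) ≤ x ^ |η| := Real.rpow_nonneg hx0.le _
    have step : C * (1 + |x|) ^ η * |x - μ| * Real.exp (-b * max (x - μ) 0) ≤
        (C * (2 ^ |η| * x ^ |η|)) * ((1 + |μ|) * x) *
          (Real.exp (b * |μ|) * Real.exp (-b * x)) := by
      apply mul_le_mul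
      · apply mul_le_mul
        · exact mul_le_mul_of_nonneg_left f1 hC
        · exact f2
        · exact abs_nonneg _
        · positivity
      · exact f3
      · positivity
      · positivity
    refine step.trans (le_of_eq ?_)
    rw [hK, hs]
    rw [Real.rpow_add hx0, Real.rpow_one]
    ring
  have hYb2 : K * (x ^ s * Real.exp (-b * x)) ≤ K * Real.exp (-(b/2) * x) := by
    apply mul_le_mul_of_nonneg_left _ (by positivity)
    have : Real.exp (-b * x) = Real.exp (-(b/2) * x) * Real.exp (-(b/2) * x) := by
      rw [← Real.exp_add]; ring_nf
    rw [this, ← mul_assoc]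
    calc x ^ s * Real.exp (-(b/2) * x) * Real.exp (-(b/2) * x)
        ≤ 1 * Real.exp (-(b/2) * x) := by
          apply mul_le_mul_of_nonneg_right hx1 (Real.exp_pos _).le
      _ = Real.exp (-(b/2) * x) := one_mul _
  have hnorm : ‖Ybound μ C η b x‖ = Ybound μ C η b x := abs_of_nonneg (Ybound_nonneg hC x)
  rw [hnorm, Real.norm_eq_abs, abs_of_pos (Real.exp_pos _)]
  exact hYb.trans hYb2

lemma fermi_continuous_E (β μ : ℝ) : Continuous (fermi β μ) := by
  unfold fermi
  apply Continuous.inv₀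
  · exact continuous_const.add ((continuous_const.mul
      (continuous_id.sub continuous_const)).rexp)
  · intro x
    have := Real.exp_pos (β * (x - μ))
    positivity

lemma fermi_continuous_β (μ E : ℝ) : Continuous (fun β => fermi β μ E) := by
  unfold fermi
  apply Continuous.inv₀
  · exact continuous_const.add ((continuous_id.mul continuous_const).rexp)
  · intro x
    have := Real.exp_pos (x * (E - μ))
    positivity

lemma integrand_aesm (β μ : ℝ) {M : ℝ → ℝ} (hMmeas : Measurable M) :
    AEStronglyMeasurable (fun E => fermi β μ E * (E - μ) * M E) volume := by
  apply Measurable.aestronglyMeasurable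
  exact (((fermi_continuous_E β μ).measurable).mul
    ((measurable_id.sub measurable_const))).mul hMmeas

lemma integrand_integrable {μ E₀ C η β : ℝ} {M : ℝ → ℝ}
    (hMmeas : Measurable M) (hMnn : ∀ E, 0 ≤ M E)
    (hA : ∀ E ≤ E₀, M E = 0) (hB : ∀ E, M E ≤ C * (1 + |E|) ^ η)
    (hβ : 0 < β) :
    Integrable (fun E => fermi β μ E * (E - μ) * M E) := by
  have hC : 0 ≤ C := by
    have := (hMnn 0).trans (hB 0)
    simpa using this
  apply Integrable.mono' (Ybound_indicator_integrable (μ := μ) (E₀ := E₀) hC hβ)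
    (integrand_aesm β μ hMmeas)
  exact Filter.Eventually.of_forall (integrand_le_bound hMnn hA hB hβ le_rfl)

theorem Y_continuous_antitone_injective
    (μ E₀ C η : ℝ) (M : ℝ → ℝ)
    (hMmeas : Measurable M) (hMnn : ∀ E, 0 ≤ M E)
    (hMnz : ¬ (∀ᵐ E ∂volume, M E = 0))
    (hA : ∀ E ≤ E₀, M E = 0)
    (hB : ∀ E, M E ≤ C * (1 + |E|) ^ η) :
    ContinuousOn (fun β => ∫ E, fermi β μ E * (E - μ) * M E) (Set.Ioi (0 : ℝ)) ∧
    AntitoneOn (fun β => ∫ E, fermi β μ E * (E - μ) * M E) (Set.Ioi (0 : ℝ)) ∧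
    (volume {E : ℝ | 0 < M E ∧ E ≠ μ} ≠ 0 →
      StrictAntiOn (fun β => ∫ E, fermi β μ E * (E - μ) * M E) (Set.Ioi (0 : ℝ)) ∧
      Set.InjOn (fun β => ∫ E, fermi β μ E * (E - μ) * M E) (Set.Ioi (0 : ℝ))) := by
  have hC : 0 ≤ C := by
    have := (hMnn 0).trans (hB 0)
    simpa using this
  have hint : ∀ β > 0, Integrable (fun E => fermi β μ E * (E - μ) * M E) :=
    fun β hβ => integrand_integrable hMmeas hMnn hA hB hβ
  -- strict antitonicity, proven first, used for injectivity
  have hanti : AntitoneOn (fun β => ∫ E, fermi β μ E * (E - μ) * M E) (Set.Ioi (0 : ℝ)) := by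
    intro β₁ h1 β₂ h2 h12
    apply integral_mono (hint β₂ h2) (hint β₁ h1)
    intro E
    exact mul_le_mul_of_nonneg_right (fermi_mul_anti μ E h12) (hMnn E)
  refine ⟨?_, hanti, ?_⟩
  · -- continuity
    intro β₀ hβ₀
    apply ContinuousAt.continuousWithinAt
    have hβ₀' : (0:ℝ) < β₀ := hβ₀
    apply continuousAt_of_dominated (bound := indicator (Ici E₀) (Ybound μ C η (β₀/2)))
    · exact Filter.Eventually.of_forall fun β => integrand_aesm β μ hMmeas
    · filter_upwards [Ioi_mem_nhds (half_lt_self hβ₀')] with β hβ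
      exact Filter.Eventually.of_forall
        (integrand_le_bound hMnn hA hB (half_pos hβ₀') (le_of_lt hβ))
    · exact Ybound_indicator_integrable hC (half_pos hβ₀')
    · exact Filter.Eventually.of_forall fun E =>
        (((fermi_continuous_β μ E).mul continuous_const).mul continuous_const).continuousAt
  · intro hpos
    have hstrict : StrictAntiOn (fun β => ∫ E, fermi β μ E * (E - μ) * M E)
        (Set.Ioi (0 : ℝ)) := by
      intro β₁ h1 β₂ h2 h12
      have hI1 := hint β₁ h1
      have hI2 := hint β₂ h2
      have hdiff : Integrable (fun E => fermi β₁ μ E * (E - μ) * M E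
          - fermi β₂ μ E * (E - μ) * M E) := hI1.sub hI2
      have hnonneg : ∀ E, 0 ≤ fermi β₁ μ E * (E - μ) * M E
          - fermi β₂ μ E * (E - μ) * M E := by
        intro E
        have := mul_le_mul_of_nonneg_right (fermi_mul_anti μ E h12.le) (hMnn E)
        linarith
      have hsupp : {E : ℝ | 0 < M E ∧ E ≠ μ} ⊆ Function.support
          (fun E => fermi β₁ μ E * (E - μ) * M E - fermi β₂ μ E * (E - μ) * M E) := by
        intro E hE
        have hstrictE := mul_lt_mul_of_pos_right (fermi_mul_strict_anti μ E h12 hE.2) hE.1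
        simp only [Function.mem_support]
        intro hcontra
        rw [sub_eq_zero] at hcontra
        rw [hcontra] at hstrictE
        exact lt_irrefl _ hstrictE
      have hmeas_pos : 0 < volume (Function.support
          (fun E => fermi β₁ μ E * (E - μ) * M E - fermi β₂ μ E * (E - μ) * M E)) := by
        calc 0 < volume {E : ℝ | 0 < M E ∧ E ≠ μ} := hpos.bot_lt
          _ ≤ _ := measure_mono hsupp
      have hint_pos : 0 < ∫ E, (fermi β₁ μ E * (E - μ) * M E
          - fermi β₂ μ E * (E - μ) * M E) :=
        (integral_pos_iff_support_of_nonneg hnonneg hdiff).2 hmeas_pos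
      rw [integral_sub hI1 hI2] at hint_pos
      linarith
    exact ⟨hstrict, hstrict.injOn⟩
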